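/- Let q be a prime power with q > m(m−1)/2 and d ≥ m−1. If f is a uniformly random polynomial of degree at most d in t variables over 𝔽_q (uniform over all 𝔽_q-linear combinations of monomials of total degree ≤ d), and x₁,…,x_m are m distinct points of 𝔽_q^t, then the probability that f(x_i) = 0 for all i = 1,…,m is exactly q^{−m}. -/
import Mathlib

open MvPolynomial

/-- Random polynomial vanishing lemma: if `q > m(m-1)/2` and `d ≥ m-1`, then for any `m`
distinct points `x₁, …, x_m` of `𝔽_q^t`, exactly a `q^{-m}` proportion of the
polynomials of degree at most `d` in `t` variables vanish at all the `xᵢ`; i.e. a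
uniformly random such polynomial vanishes at all of them with probability `q^{-m}`. -/
theorem stmt_9 {F : Type} [Field F] [Fintype F] (t m d : ℕ)
    (hq : m * (m - 1) / 2 < Fintype.card F) (hd : m - 1 ≤ d)
    (x : Fin m → (Fin t → F)) (hx : Function.Injective x) :
    Nat.card {f : MvPolynomial (Fin t) F //
        f.totalDegree ≤ d ∧ ∀ i, MvPolynomial.eval (x i) f = 0} *
      Fintype.card F ^ m
    = Nat.card {f : MvPolynomial (Fin t) F // f.totalDegree ≤ d} := by
  classical
  set V := restrictTotalDegree (Fin t) F d with hV
  let L : V →ₗ[F] (Fin m → F) :=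
    LinearMap.pi fun i => (aeval (x i)).toLinearMap ∘ₗ V.subtype
  have hLapp : ∀ (v : V) (i : Fin m), L v i = eval (x i) (v : MvPolynomial (Fin t) F) := by
    intro v i
    simp [L, aeval_def, eval₂_eq_eval_map, Algebra.algebraMap_self, MvPolynomial.map_id]
  -- interpolation polynomials
  let g : Fin m → Fin m → MvPolynomial (Fin t) F := fun i j =>
    if h : x j ≠ x i then
      X (Classical.choose (Function.ne_iff.mp h)) -
        C (x j (Classical.choose (Function.ne_iff.mp h)))
    else 1
  have hg_deg : ∀ i j, (g i j).totalDegree ≤ 1 := by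
    intro i j
    by_cases h : x j ≠ x i
    · simp only [g, dif_pos h]
      refine (totalDegree_sub _ _).trans ?_
      simp [totalDegree_X]
    · simp only [g]
      rw [dif_neg h]
      simp
  have hg_eval_self : ∀ i j, j ≠ i → eval (x i) (g i j) ≠ 0 := by
    intro i j hji
    have h : x j ≠ x i := fun h => hji (hx h)
    have hk := Classical.choose_spec (Function.ne_iff.mp h)
    simp only [g]
    rw [dif_pos h]
    simp only [map_sub, eval_X, eval_C, sub_ne_zero]
    exact fun hc => hk hc.symm
  have hg_eval_zero : ∀ i j, j ≠ i → eval (x j) (g i j) = 0 := by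
    intro i j hji
    have h : x j ≠ x i := fun h => hji (hx h)
    simp only [g]
    rw [dif_pos h]
    simp
  let p : Fin m → MvPolynomial (Fin t) F := fun i => ∏ j ∈ Finset.univ.erase i, g i j
  have hp_deg : ∀ i, (p i).totalDegree ≤ d := by
    intro i
    refine (totalDegree_finset_prod _ _).trans ?_
    calc ∑ j ∈ Finset.univ.erase i, (g i j).totalDegree
        ≤ ∑ _j ∈ Finset.univ.erase i, 1 := Finset.sum_le_sum fun j _ => hg_deg i j
      _ = m - 1 := by simp [Finset.card_erase_of_mem]
      _ ≤ d := hd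
  have hp_self : ∀ i, eval (x i) (p i) ≠ 0 := by
    intro i
    simp only [p, map_prod]
    exact Finset.prod_ne_zero_iff.mpr fun j hj =>
      hg_eval_self i j (Finset.ne_of_mem_erase hj)
  have hp_other : ∀ i l, l ≠ i → eval (x l) (p i) = 0 := by
    intro i l hl
    simp only [p, map_prod]
    exact Finset.prod_eq_zero (Finset.mem_erase.mpr ⟨hl, Finset.mem_univ l⟩)
      (hg_eval_zero i l hl)
  have hsurj : Function.Surjective L := by
    intro v
    set f : MvPolynomial (Fin t) F :=
      ∑ i, C ((eval (x i) (p i))⁻¹ * v i) * p i with hf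
    have hfdeg : f.totalDegree ≤ d := by
      refine (totalDegree_finset_sum _ _).trans (Finset.sup_le fun i _ => ?_)
      refine (totalDegree_mul _ _).trans ?_
      rw [totalDegree_C, zero_add]
      exact hp_deg i
    refine ⟨⟨f, (mem_restrictTotalDegree _ _ _).mpr hfdeg⟩, ?_⟩
    funext l
    rw [hLapp]
    simp only [hf, map_sum, map_mul, eval_C]
    rw [Finset.sum_eq_single l]
    · rw [mul_comm ((eval (x l) (p l))⁻¹) (v l), mul_assoc,
        inv_mul_cancel₀ (hp_self l), mul_one]
    · intro i _ hi
      rw [hp_other i l (by exact fun h => hi h.symm), mul_zero]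
    · intro h; exact absurd (Finset.mem_univ l) h
  -- counting
  have e1 : Nat.card {f : MvPolynomial (Fin t) F //
      f.totalDegree ≤ d ∧ ∀ i, eval (x i) f = 0} = Nat.card (LinearMap.ker L) := by
    refine Nat.card_congr ⟨fun f => ⟨⟨f.1, (mem_restrictTotalDegree _ _ _).mpr f.2.1⟩, ?_⟩,
      fun v => ⟨v.1.1, (mem_restrictTotalDegree _ _ _).mp v.1.2, fun i => ?_⟩,
      fun f => rfl, fun v => rfl⟩
    · rw [LinearMap.mem_ker]
      funext i
      rw [hLapp]
      exact f.2.2 i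
    · have := v.2
      rw [LinearMap.mem_ker] at this
      have := congrFun this i
      rwa [hLapp] at this
  have e2 : Nat.card {f : MvPolynomial (Fin t) F // f.totalDegree ≤ d} = Nat.card V :=
    Nat.card_congr (Equiv.subtypeEquivRight fun f =>
      (mem_restrictTotalDegree (Fin t) d f).symm)
  rw [e1, e2]
  have key := AddSubgroup.card_eq_card_quotient_mul_card_addSubgroup
    (LinearMap.ker L).toAddSubgroup
  have equot : Nat.card (V ⧸ (LinearMap.ker L).toAddSubgroup) = Fintype.card F ^ m := by
    have e := (LinearMap.quotKerEquivOfSurjective L hsurj).toEquiv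
    have h1 : Nat.card (V ⧸ LinearMap.ker L) = Nat.card (Fin m → F) := Nat.card_congr e
    have h2 : Nat.card (Fin m → F) = Fintype.card F ^ m := by
      simp [Nat.card_eq_fintype_card]
    have h3 : Nat.card (V ⧸ (LinearMap.ker L).toAddSubgroup)
        = Nat.card (V ⧸ LinearMap.ker L) := rfl
    rw [h3, h1, h2]
  have eker : Nat.card ((LinearMap.ker L).toAddSubgroup) = Nat.card (LinearMap.ker L) := rfl
  rw [equot, eker] at key
  rw [key, mul_comm]
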